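/- Let f(x) = (1/2)(x^T P x + 2 q^T x + r) + I_{F,g}(x) be an extended quadratic function on R^n with nonempty constraint set having free parameter representation x = x_0 + V_2 z. Then f is strictly convex on its domain if and only if V_2^T P V_2 is positive definite. -/

import Mathlib

open Matrix

/-- The quadratic part of an extended quadratic function:
`(1/2)(xᵀ P x + 2 qᵀ x + r)`. -/
noncomputable def quadPart {n : ℕ} (P : Matrix (Fin n) (Fin n) ℝ) (q : Fin n → ℝ) (r : ℝ)
    (x : Fin n → ℝ) : ℝ :=
  (1 / 2) * (x ⬝ᵥ P.mulVec x + 2 * (q ⬝ᵥ x) + r)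

lemma quad_key {n : ℕ} (P : Matrix (Fin n) (Fin n) ℝ) (hP : P.IsSymm) (q : Fin n → ℝ) (r : ℝ)
    (x y : Fin n → ℝ) (a b : ℝ) (hab : a + b = 1) :
    a * quadPart P q r x + b * quadPart P q r y - quadPart P q r (a • x + b • y) =
      (a * b / 2) * ((x - y) ⬝ᵥ P.mulVec (x - y)) := by
  have hsym : ∀ u v : Fin n → ℝ, u ⬝ᵥ P.mulVec v = v ⬝ᵥ P.mulVec u := by
    intro u v
    rw [dotProduct_mulVec, dotProduct_comm, ← mulVec_transpose, hP.eq]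
  simp only [quadPart, mulVec_add, mulVec_smul, dotProduct_add, add_dotProduct,
    dotProduct_smul, smul_dotProduct, smul_eq_mul, mulVec_sub, dotProduct_sub, sub_dotProduct]
  have h1 := hsym x y
  have hb : b = 1 - a := by linarith
  subst hb
  ring_nf

/-- an extended quadratic with nonempty constraint set and free parameter
representation `x = x₀ + V₂ z` is strictly convex on its domain `{x | Fx + g = 0}`
iff `V₂ᵀ P V₂` is positive definite. -/
theorem extQuad_strictConvex_iff {n l p : ℕ}
    (P : Matrix (Fin n) (Fin n) ℝ) (hP : P.IsSymm) (q : Fin n → ℝ) (r : ℝ)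
    (F : Matrix (Fin p) (Fin n) ℝ) (g : Fin p → ℝ)
    (x₀ : Fin n → ℝ) (hx₀ : F.mulVec x₀ + g = 0)
    (V₂ : Matrix (Fin n) (Fin l) ℝ)
    (hV₂ : ∀ x, F.mulVec x = 0 ↔ ∃ z, x = V₂.mulVec z)
    (hV₂inj : ∀ z, V₂.mulVec z = 0 → z = 0) :
    StrictConvexOn ℝ {x | F.mulVec x + g = 0} (quadPart P q r) ↔
      (V₂.transpose * P * V₂).PosDef := by
  have hquad : ∀ z : Fin l → ℝ,
      z ⬝ᵥ (V₂.transpose * P * V₂).mulVec z = (V₂.mulVec z) ⬝ᵥ P.mulVec (V₂.mulVec z) := by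
    intro z
    rw [← mulVec_mulVec, ← mulVec_mulVec, dotProduct_mulVec, ← mulVec_transpose,
      transpose_transpose]
  have hconv : Convex ℝ {x : Fin n → ℝ | F.mulVec x + g = 0} := by
    intro x hx y hy a b ha hb hab
    simp only [Set.mem_setOf_eq] at *
    have hx' : F.mulVec x = -g := by rwa [← eq_neg_iff_add_eq_zero] at hx
    have hy' : F.mulVec y = -g := by rwa [← eq_neg_iff_add_eq_zero] at hy
    rw [← eq_neg_iff_add_eq_zero]
    simp only [mulVec_add, mulVec_smul, hx', hy']
    rw [← add_smul, hab, one_smul]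
  constructor
  · rintro ⟨-, hsc⟩
    rw [posDef_iff_dotProduct_mulVec]
    refine ⟨?_, ?_⟩
    · rw [Matrix.IsHermitian]
      rw [conjTranspose_eq_transpose_of_trivial]
      simp [Matrix.transpose_mul, hP.eq, Matrix.mul_assoc]
    · intro z hz
      have hVz : V₂.mulVec z ≠ 0 := fun h => hz (hV₂inj z h)
      have hx : x₀ + V₂.mulVec z ∈ {x | F.mulVec x + g = 0} := by
        have : F.mulVec (V₂.mulVec z) = 0 := by
          rw [hV₂]; exact ⟨z, rfl⟩
        simp only [Set.mem_setOf_eq, mulVec_add, this]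
        simpa [add_comm, add_assoc, add_left_comm] using hx₀
      have hy : x₀ ∈ {x | F.mulVec x + g = 0} := hx₀
      have hne : x₀ + V₂.mulVec z ≠ x₀ := by
        intro h; apply hVz; have := congrArg (· - x₀) h; simpa using this
      have := hsc hx hy hne (by norm_num : (0:ℝ) < 1/2) (by norm_num : (0:ℝ) < 1/2)
        (by norm_num)
      have hkey := quad_key P hP q r (x₀ + V₂.mulVec z) x₀ (1/2) (1/2) (by norm_num)
      simp only [smul_eq_mul] at this
      have hpos : 0 < ((1:ℝ)/2 * (1/2) / 2) *
          ((x₀ + V₂.mulVec z - x₀) ⬝ᵥ P.mulVec (x₀ + V₂.mulVec z - x₀)) := by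
        rw [← hkey]; linarith
      have hsub : x₀ + V₂.mulVec z - x₀ = V₂.mulVec z := by abel
      rw [hsub] at hpos
      have : (0:ℝ) < z ⬝ᵥ (V₂.transpose * P * V₂).mulVec z := by
        rw [hquad]; nlinarith
      simpa using this
  · intro hpd
    refine ⟨hconv, ?_⟩
    intro x hx y hy hne a b ha hb hab
    simp only [Set.mem_setOf_eq] at hx hy
    have hd : F.mulVec (x - y) = 0 := by
      rw [mulVec_sub]
      have : F.mulVec x = F.mulVec y := by
        have h1 : F.mulVec x = -g := by rwa [← eq_neg_iff_add_eq_zero] at hx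
        have h2 : F.mulVec y = -g := by rwa [← eq_neg_iff_add_eq_zero] at hy
        rw [h1, h2]
      simp [this]
    obtain ⟨z, hz⟩ := (hV₂ (x - y)).mp hd
    have hz0 : z ≠ 0 := by
      intro h; apply hne
      rw [h, mulVec_zero] at hz
      have := sub_eq_zero.mp hz; exact this
    have hzpos := (posDef_iff_dotProduct_mulVec.mp hpd).2 hz0
    have this : (0:ℝ) < (x - y) ⬝ᵥ P.mulVec (x - y) := by
      rw [hz, ← hquad]; simpa using hzpos
    have hkey := quad_key P hP q r x y a b hab
    simp only [smul_eq_mul]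
    nlinarith [mul_pos ha hb, this, hkey]
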